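/- Each vertex window v_i (v_{i,k} = 1/(2i) for 1 ≤ |k| ≤ i, else 0) is an extreme point of the convex polytope W of symmetric tapered probability windows. -/

import Mathlib

open Finset

/-- The class of symmetric tapered probability windows supported on `{-K,…,K}`. -/
def TaperedWindow (K : ℕ) (w : ℤ → ℝ) : Prop :=
  w 0 = 0 ∧
  (∀ k : ℤ, w k = w (-k)) ∧
  (∀ j k : ℤ, 0 < j → j ≤ k → k ≤ (K : ℤ) → w k ≤ w j) ∧
  (∀ k : ℤ, 0 ≤ w k) ∧
  (∀ k : ℤ, (K : ℤ) < |k| → w k = 0) ∧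
  ∑ k ∈ Finset.Icc (-(K : ℤ)) (K : ℤ), w k = 1

/-- The vertex window `v i`: weight `1/(2i)` for `1 ≤ |k| ≤ i`, else `0`. -/
noncomputable def vertexWindow (i : ℕ) : ℤ → ℝ :=
  fun k => if 1 ≤ |k| ∧ |k| ≤ (i : ℤ) then 1 / (2 * (i : ℝ)) else 0

lemma sumAux (K i : ℕ) (hiK : i ≤ K) (w : ℤ → ℝ) (c : ℝ)
    (h0 : w 0 = 0)
    (hz : ∀ k : ℤ, (i : ℤ) < |k| → w k = 0)
    (hc : ∀ k : ℤ, 1 ≤ |k| → |k| ≤ (i : ℤ) → w k = c) :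
    ∑ k ∈ Finset.Icc (-(K : ℤ)) (K : ℤ), w k = 2 * i * c := by
  have hsub : Finset.Icc (-(i : ℤ)) i ⊆ Finset.Icc (-(K : ℤ)) K := by
    apply Finset.Icc_subset_Icc <;> omega
  rw [← Finset.sum_subset hsub (by
    intro k hk hnk
    simp only [Finset.mem_Icc] at hk hnk
    exact hz k (by rcases abs_cases k with ⟨h1, h2⟩ | ⟨h1, h2⟩ <;> omega))]
  have h0mem : (0 : ℤ) ∈ Finset.Icc (-(i : ℤ)) i := by simp
  rw [← Finset.add_sum_erase _ w h0mem, h0, zero_add]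
  have hconst : ∀ k ∈ (Finset.Icc (-(i : ℤ)) i).erase 0, w k = c := by
    intro k hk
    simp only [Finset.mem_erase, Finset.mem_Icc] at hk
    rcases abs_cases k with ⟨h1, h2⟩ | ⟨h1, h2⟩ <;> exact hc k (by omega) (by omega)
  rw [Finset.sum_congr rfl hconst, Finset.sum_const]
  have hcard : ((Finset.Icc (-(i : ℤ)) i).erase 0).card = 2 * i := by
    rw [Finset.card_erase_of_mem h0mem, Int.card_Icc]
    omega
  rw [hcard]
  push_cast [nsmul_eq_mul]
  ring

lemma memAux (K i : ℕ) (hi : 1 ≤ i) (hiK : i ≤ K) :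
    TaperedWindow K (vertexWindow i) := by
  have hi' : (0 : ℝ) < 2 * i := by positivity
  refine ⟨by simp [vertexWindow], ?_, ?_, ?_, ?_, ?_⟩
  · intro k; simp [vertexWindow, abs_neg]
  · intro j k hj hjk hk
    unfold vertexWindow
    by_cases h : 1 ≤ |k| ∧ |k| ≤ (i : ℤ)
    · have hk' : |k| = k := abs_of_pos (lt_of_lt_of_le hj hjk)
      have hj' : |j| = j := abs_of_pos hj
      obtain ⟨ha1, ha2⟩ := h
      rw [if_pos ⟨ha1, ha2⟩, if_pos ⟨by omega, by omega⟩]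
    · rw [if_neg h]
      split <;> positivity
  · intro k; unfold vertexWindow; split <;> positivity
  · intro k hk
    unfold vertexWindow
    rw [if_neg (by omega)]
  · have hzv : ∀ k : ℤ, (i : ℤ) < |k| → vertexWindow i k = 0 := by
      intro k hk
      unfold vertexWindow
      rw [if_neg (by omega)]
    have hcv : ∀ k : ℤ, 1 ≤ |k| → |k| ≤ (i : ℤ) → vertexWindow i k = 1 / (2 * (i : ℝ)) := by
      intro k h1 h2
      unfold vertexWindow
      rw [if_pos ⟨h1, h2⟩]
    rw [sumAux K i hiK _ (1 / (2 * (i : ℝ))) (by simp [vertexWindow]) hzv hcv]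
    field_simp

lemma eqAux (K i : ℕ) (hi : 1 ≤ i) (hiK : i ≤ K) (w : ℤ → ℝ)
    (hw : TaperedWindow K w)
    (hz : ∀ k : ℤ, (i : ℤ) < |k| → w k = 0)
    (hc : ∀ k : ℤ, 1 ≤ k → k ≤ (i : ℤ) → w k = w 1) :
    w = vertexWindow i := by
  obtain ⟨h0, hsym, hmono, hnn, hsupp, hsum⟩ := hw
  have habs : ∀ k : ℤ, 1 ≤ |k| → |k| ≤ (i : ℤ) → w k = w 1 := by
    intro k h1 h2
    rcases abs_cases k with ⟨hk', hk0⟩ | ⟨hk', hk0⟩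
    · exact hc k (by omega) (by omega)
    · rw [hsym k]
      exact hc (-k) (by omega) (by omega)
  have hsum' := sumAux K i hiK w (w 1) h0 hz habs
  rw [hsum] at hsum'
  have hw1 : w 1 = 1 / (2 * (i : ℝ)) := by
    have hi' : (0 : ℝ) < 2 * i := by positivity
    field_simp
    linarith [hsum']
  funext k
  unfold vertexWindow
  by_cases h : 1 ≤ |k| ∧ |k| ≤ (i : ℤ)
  · rw [if_pos h, habs k h.1 h.2, hw1]
  · rw [if_neg h]
    rcases lt_or_ge (|k|) 1 with h' | h'
    · have : k = 0 := by rcases abs_cases k with ⟨e1, e2⟩ | ⟨e1, e2⟩ <;> omega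
      rw [this, h0]
    · exact hz k (by push_neg at h; exact h h')

theorem stmt11 (K i : ℕ) (hi : 1 ≤ i) (hiK : i ≤ K) :
    vertexWindow i ∈ Set.extremePoints ℝ {w : ℤ → ℝ | TaperedWindow K w} := by
  refine ⟨memAux K i hi hiK, ?_⟩
  rintro w₁ h₁ w₂ h₂ ⟨a, b, ha, hb, hab, hx⟩
  obtain ⟨h10, h1sym, h1mono, h1nn, h1supp, h1sum⟩ := h₁
  obtain ⟨h20, h2sym, h2mono, h2nn, h2supp, h2sum⟩ := h₂
  have hpt : ∀ k : ℤ, a * w₁ k + b * w₂ k = vertexWindow i k := by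
    intro k
    have := congrFun hx k
    simpa using this
  -- vanishing beyond i
  have hz : ∀ k : ℤ, (i : ℤ) < |k| → w₁ k = 0 ∧ w₂ k = 0 := by
    intro k hk
    have hv : vertexWindow i k = 0 := by
      unfold vertexWindow; rw [if_neg (by omega)]
    have h := hpt k
    rw [hv] at h
    have h1 : 0 ≤ a * w₁ k := mul_nonneg ha.le (h1nn k)
    have h2 : 0 ≤ b * w₂ k := mul_nonneg hb.le (h2nn k)
    constructor
    · have : a * w₁ k = 0 := by linarith
      exact (mul_eq_zero.mp this).resolve_left (ne_of_gt ha)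
    · have : b * w₂ k = 0 := by linarith
      exact (mul_eq_zero.mp this).resolve_left (ne_of_gt hb)
  -- constancy on [1, i]
  have hconst : ∀ k : ℤ, 1 ≤ k → k ≤ (i : ℤ) → w₁ k = w₁ 1 ∧ w₂ k = w₂ 1 := by
    intro k h1 h2
    have hv : vertexWindow i k = vertexWindow i 1 := by
      unfold vertexWindow
      have hk' : |k| = k := abs_of_pos (by omega)
      rw [if_pos ⟨by omega, by omega⟩, if_pos ⟨by simp, by simp; omega⟩]
    have heq : a * w₁ k + b * w₂ k = a * w₁ 1 + b * w₂ 1 := by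
      rw [hpt k, hpt 1, hv]
    have hm1 : w₁ k ≤ w₁ 1 := h1mono 1 k one_pos h1 (by omega)
    have hm2 : w₂ k ≤ w₂ 1 := h2mono 1 k one_pos h1 (by omega)
    constructor
    · nlinarith
    · nlinarith
  refine And.left (⟨?_, ?_⟩ : w₁ = vertexWindow i ∧ w₂ = vertexWindow i)
  · exact eqAux K i hi hiK w₁ ⟨h10, h1sym, h1mono, h1nn, h1supp, h1sum⟩
      (fun k hk => (hz k hk).1) (fun k h1 h2 => (hconst k h1 h2).1)
  · exact eqAux K i hi hiK w₂ ⟨h20, h2sym, h2mono, h2nn, h2supp, h2sum⟩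
      (fun k hk => (hz k hk).2) (fun k h1 h2 => (hconst k h1 h2).2)
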